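/- Let X be a closed Vec-subvariety of a polynomial functor P, let V ∈ Vec, and let U1, U2 be linear subspaces of V. Then X(U1 ∩ U2) = X(U1) ×_{X(V)} X(U2) = X(U1) ×_{P(V)} P(U2) = P(U1) ×_{P(V)} X(U2), where all fibre products are taken with respect to the closed embeddings induced by the inclusions U1, U2 ⊆ V and X ⊆ P. -/

import Mathlib

open CategoryTheory

noncomputable section

variable (K : Type) [Field K]

/-- The coordinate ring of the affine space associated to a finite-dimensional
vector space `W`: a polynomial ring on a basis of `W`, i.e. the symmetric algebra
on the dual of `W`. -/
abbrev coordRing (W : Type) [AddCommGroup W] [Module K W] : Type :=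
  MvPolynomial (Fin (Module.finrank K W)) K

/-- Evaluation of a "polynomial function on `W`" at a point `w : W`. -/
def evalAt {W : Type} [AddCommGroup W] [Module K W] [FiniteDimensional K W]
    (w : W) : coordRing K W →+* K :=
  MvPolynomial.eval (fun i => (Module.finBasis K W).repr w i)

/-- `g` is the ring homomorphism between coordinate rings induced by the
(polynomial) map `f`. -/
def IsEvalCompat {W₁ W₂ : Type} [AddCommGroup W₁] [Module K W₁] [FiniteDimensional K W₁]
    [AddCommGroup W₂] [Module K W₂] [FiniteDimensional K W₂]
    (g : coordRing K W₂ →+* coordRing K W₁) (f : W₁ → W₂) : Prop :=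
  ∀ (p : coordRing K W₂) (w : W₁), evalAt K w (g p) = evalAt K (f w) p

/-- The ring homomorphism between coordinate rings induced by a polynomial map
`f : W₁ → W₂` (pullback of polynomial functions along `f`).  Since `K` is
infinite, such a ring homomorphism is unique if it exists; it exists whenever
`f` is a polynomial map. -/
def polyComap {W₁ W₂ : Type} [AddCommGroup W₁] [Module K W₁] [FiniteDimensional K W₁]
    [AddCommGroup W₂] [Module K W₂] [FiniteDimensional K W₂]
    (f : W₁ → W₂) : coordRing K W₂ →+* coordRing K W₁ :=
  letI := Classical.propDecidable
  if h : ∃ g, IsEvalCompat K g f then h.choose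
  else (MvPolynomial.C : K →+* coordRing K W₁).comp MvPolynomial.constantCoeff

/-- `f : V → W` is a polynomial map of degree at most `d`: in (any) coordinates,
`f` is given by polynomials of total degree at most `d`. -/
def IsPolynomialMap {V W : Type} [AddCommGroup V] [Module K V]
    [AddCommGroup W] [Module K W] (d : ℕ) (f : V → W) : Prop :=
  ∃ (n m : ℕ) (eV : (Fin n → K) ≃ₗ[K] V) (eW : W ≃ₗ[K] (Fin m → K))
    (p : Fin m → MvPolynomial (Fin n) K),
    (∀ i, (p i).totalDegree ≤ d) ∧
    ∀ x : Fin n → K, eW (f (eV x)) = fun i => MvPolynomial.eval x (p i)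

/-- A polynomial functor `P` on the category `Vec` of finite-dimensional
`K`-vector spaces: a functor such that all the maps
`Hom(U,V) → Hom(P(U),P(V))` are polynomial of degree bounded by `deg`. -/
structure PolyFunctor (K : Type) [Field K] where
  obj : FGModuleCat K → FGModuleCat K
  map : ∀ {U V : FGModuleCat K}, (U →ₗ[K] V) → (obj U →ₗ[K] obj V)
  map_id : ∀ U : FGModuleCat K, map (LinearMap.id (M := U)) = LinearMap.id
  map_comp : ∀ {U V W : FGModuleCat K} (φ : U →ₗ[K] V) (ψ : V →ₗ[K] W),
    map (ψ ∘ₗ φ) = map ψ ∘ₗ map φ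
  deg : ℕ
  map_poly : ∀ U V : FGModuleCat K,
    IsPolynomialMap K deg (fun φ : U →ₗ[K] V => (map φ : obj U →ₗ[K] obj V))

/-- A (closed) `Vec`-variety `X` inside the polynomial functor `P`: for every
finite-dimensional `V`, a reduced closed subscheme `X(V) ⊆ P(V)` (given by its
radical vanishing ideal in the coordinate ring of `P(V)`), such that
`P(φ)` maps `X(U)` into `X(V)` for every linear map `φ : U → V`. -/
structure VecVariety (K : Type) [Field K] (P : PolyFunctor K) where
  ideal : ∀ V : FGModuleCat K, Ideal (coordRing K (P.obj V))
  isRadical : ∀ V, (ideal V).IsRadical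
  mapsInto : ∀ {U V : FGModuleCat K} (φ : U →ₗ[K] V),
    ∀ f ∈ ideal V, polyComap K (fun u : P.obj U => P.map φ u) f ∈ ideal U

variable {K} {P : PolyFunctor K}

/-- A local ring is regular if it is Noetherian and its Krull dimension equals
the dimension of its cotangent space (equivalently, its maximal ideal is
generated by a regular system of parameters). -/
def IsRegularLocal (R : Type) [CommRing R] [IsLocalRing R] : Prop :=
  IsNoetherianRing R ∧
    ringKrullDim R =
      (Module.finrank (IsLocalRing.ResidueField R) (IsLocalRing.CotangentSpace R) : WithBot (WithTop ℕ))

/-- The underlying closed subset `X(V)` of the spectrum of the ambient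
coordinate ring. -/
def VecVariety.zeroSet (X : VecVariety K P) (V : FGModuleCat K) :
    Set (PrimeSpectrum (coordRing K (P.obj V))) :=
  PrimeSpectrum.zeroLocus (X.ideal V : Set (coordRing K (P.obj V)))

/-- The singular locus of the scheme `X(V) = Spec(K[P(V)]/I(X(V)))`, viewed
inside the spectrum of the ambient coordinate ring. -/
def VecVariety.singSet (X : VecVariety K P) (V : FGModuleCat K) :
    Set (PrimeSpectrum (coordRing K (P.obj V))) :=
  {p | ∃ q : PrimeSpectrum ((coordRing K (P.obj V)) ⧸ X.ideal V),
        PrimeSpectrum.comap (Ideal.Quotient.mk (X.ideal V)) q = p ∧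
        ¬ IsRegularLocal (Localization.AtPrime q.asIdeal)}

/-- `Y` is a closed `Vec`-subvariety of `X`. -/
def VecVariety.IsClosedSub (Y X : VecVariety K P) : Prop :=
  ∀ V, X.ideal V ≤ Y.ideal V

end

section Helpers

variable {K : Type} [Field K]

variable {W₁ W₂ W₃ : Type}
  [AddCommGroup W₁] [Module K W₁] [FiniteDimensional K W₁]
  [AddCommGroup W₂] [Module K W₂] [FiniteDimensional K W₂]
  [AddCommGroup W₃] [Module K W₃] [FiniteDimensional K W₃]

lemma exists_isEvalCompat (f : W₁ →ₗ[K] W₂) : ∃ g, IsEvalCompat K g ⇑f := by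
  classical
  set B₁ := Module.finBasis K W₁ with hB₁
  set B₂ := Module.finBasis K W₂ with hB₂
  refine ⟨(MvPolynomial.aeval fun i =>
      ∑ j, MvPolynomial.C (B₂.repr (f (B₁ j)) i) * MvPolynomial.X j).toRingHom, ?_⟩
  intro p w
  show MvPolynomial.eval _ (MvPolynomial.aeval _ p) = MvPolynomial.eval _ p
  rw [MvPolynomial.aeval_def, MvPolynomial.eval_eval₂]
  have h1 : (MvPolynomial.eval fun j => B₁.repr w j).comp
      (algebraMap K (MvPolynomial (Fin (Module.finrank K W₁)) K)) = RingHom.id K := by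
    ext a
    simp [MvPolynomial.algebraMap_eq]
  rw [h1]
  have h2 : ∀ i, MvPolynomial.eval (fun j => B₁.repr w j)
      (∑ j, MvPolynomial.C (B₂.repr (f (B₁ j)) i) * MvPolynomial.X j) = B₂.repr (f w) i := by
    intro i
    have hw : f w = ∑ j, (B₁.repr w j) • f (B₁ j) := by
      conv_lhs => rw [← B₁.sum_repr w]
      rw [map_sum]
      simp
    rw [hw]
    simp [map_sum, Finsupp.smul_apply, smul_eq_mul, mul_comm]
  simp only [← hB₁, ← hB₂, h2, MvPolynomial.eval₂_id]

lemma isEvalCompat_unique [CharZero K] {f : W₁ → W₂}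
    {g₁ g₂ : coordRing K W₂ →+* coordRing K W₁}
    (h₁ : IsEvalCompat K g₁ f) (h₂ : IsEvalCompat K g₂ f) : g₁ = g₂ := by
  refine RingHom.ext fun p => ?_
  apply MvPolynomial.funext
  intro x
  set B₁ := Module.finBasis K W₁ with hB₁
  have hx : (fun i => B₁.repr (B₁.equivFun.symm x) i) = x := by
    funext i; rw [← B₁.equivFun_apply, B₁.equivFun.apply_symm_apply]
  have e₁ := h₁ p (B₁.equivFun.symm x)
  have e₂ := h₂ p (B₁.equivFun.symm x)
  unfold evalAt at e₁ e₂
  rw [← hB₁, hx] at e₁ e₂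
  rw [e₁, e₂]

lemma polyComap_isEvalCompat (f : W₁ →ₗ[K] W₂) : IsEvalCompat K (polyComap K ⇑f) ⇑f := by
  unfold polyComap
  rw [dif_pos (exists_isEvalCompat f)]
  exact (exists_isEvalCompat f).choose_spec

lemma polyComap_eq [CharZero K] {f : W₁ → W₂} {g : coordRing K W₂ →+* coordRing K W₁}
    (h : IsEvalCompat K g f) : polyComap K f = g := by
  have hex : ∃ g, IsEvalCompat K g f := ⟨g, h⟩
  unfold polyComap
  rw [dif_pos hex]
  exact isEvalCompat_unique hex.choose_spec h

lemma IsEvalCompat.comp {f₁ : W₁ → W₂} {f₂ : W₂ → W₃} {g₁ : coordRing K W₂ →+* coordRing K W₁}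
    {g₂ : coordRing K W₃ →+* coordRing K W₂}
    (h₁ : IsEvalCompat K g₁ f₁) (h₂ : IsEvalCompat K g₂ f₂) :
    IsEvalCompat K (g₁.comp g₂) (f₂ ∘ f₁) := fun p w =>
  (h₁ (g₂ p) w).trans (h₂ p (f₁ w))

lemma polyComap_comp [CharZero K] (f₁ : W₁ →ₗ[K] W₂) (f₂ : W₂ →ₗ[K] W₃) :
    polyComap K (⇑f₂ ∘ ⇑f₁) = (polyComap K ⇑f₁).comp (polyComap K ⇑f₂) :=
  polyComap_eq ((polyComap_isEvalCompat f₁).comp (polyComap_isEvalCompat f₂))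

lemma polyComap_id [CharZero K] : polyComap K (id : W₁ → W₁) = RingHom.id _ :=
  polyComap_eq (fun _ _ => rfl)

end Helpers

section PushoutLemma

open CategoryTheory Limits

lemma isPushout_of_surjective {R A B C : Type} [CommRing R] [CommRing A] [CommRing B] [CommRing C]
    (f : R →+* A) (g : R →+* B) (h : A →+* C) (k : B →+* C)
    (w : h.comp f = k.comp g)
    (hf : Function.Surjective f) (hg : Function.Surjective g)
    (hfh : Function.Surjective ⇑(h.comp f))
    (hker : RingHom.ker (h.comp f) ≤ RingHom.ker f ⊔ RingHom.ker g) :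
    IsPushout (CommRingCat.ofHom f) (CommRingCat.ofHom g)
      (CommRingCat.ofHom h) (CommRingCat.ofHom k) := by
  have wcat : CommRingCat.ofHom f ≫ CommRingCat.ofHom h
      = CommRingCat.ofHom g ≫ CommRingCat.ofHom k :=
    CommRingCat.hom_ext (RingHom.ext fun x => RingHom.congr_fun w x)
  set N := RingHom.ker (h.comp f) with hN
  let e : (R ⧸ N) ≃+* C := RingHom.quotientKerEquivOfSurjective hfh
  have he : ∀ x : R, e (Ideal.Quotient.mk N x) = h (f x) := fun x => rfl
  -- the data needed for every cocone
  have key : ∀ s : PushoutCocone (CommRingCat.ofHom f) (CommRingCat.ofHom g),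
      ∃ d : C →+* s.pt, ∀ x : R, d (h (f x)) = s.inl.hom (f x) := by
    intro s
    let inl' : A →+* s.pt := s.inl.hom
    let inr' : B →+* s.pt := s.inr.hom
    have hcond : ∀ x : R, inl' (f x) = inr' (g x) := fun x =>
      DFunLike.congr_fun (congrArg CommRingCat.Hom.hom s.condition) x
    let t : R →+* s.pt := inl'.comp f
    have ht : ∀ x ∈ N, t x = 0 := by
      intro x hx
      obtain ⟨y, hy, z, hz, rfl⟩ := Submodule.mem_sup.mp (hker hx)
      have hy0 : f y = 0 := hy
      have hz0 : g z = 0 := hz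
      show inl' (f (y + z)) = 0
      rw [map_add, map_add, hy0, hcond z, hz0, map_zero, map_zero, add_zero]
    refine ⟨(Ideal.Quotient.lift N t ht).comp e.symm.toRingHom, fun x => ?_⟩
    have hsymm : e.symm (h (f x)) = Ideal.Quotient.mk N x := by
      apply e.injective
      rw [RingEquiv.apply_symm_apply]
      exact (he x).symm
    show (Ideal.Quotient.lift N t ht) (e.symm (h (f x))) = inl' (f x)
    rw [hsymm, Ideal.Quotient.lift_mk]
    rfl
  classical
  refine IsPushout.of_isColimit' ⟨wcat⟩ (PushoutCocone.IsColimit.mk _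
    (fun s => CommRingCat.ofHom (key s).choose) (fun s => ?_) (fun s => ?_) (fun s m hm₁ hm₂ => ?_)
    )
  · -- fac_left : ofHom h ≫ desc = s.inl
    refine CommRingCat.hom_ext (RingHom.ext fun a => ?_)
    obtain ⟨x, rfl⟩ := hf a
    exact (key s).choose_spec x
  · -- fac_right : ofHom k ≫ desc = s.inr
    refine CommRingCat.hom_ext (RingHom.ext fun b => ?_)
    obtain ⟨x, rfl⟩ := hg b
    have : k (g x) = h (f x) := (RingHom.congr_fun w x).symm
    show (key s).choose (k (g x)) = s.inr.hom (g x)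
    rw [this, (key s).choose_spec x]
    exact DFunLike.congr_fun (congrArg CommRingCat.Hom.hom s.condition) x
  · -- uniqueness
    refine CommRingCat.hom_ext (RingHom.ext fun c => ?_)
    obtain ⟨x, rfl⟩ := hfh c
    show m.hom (h (f x)) = (key s).choose (h (f x))
    rw [(key s).choose_spec x]
    exact DFunLike.congr_fun (congrArg CommRingCat.Hom.hom hm₁) (f x)

end PushoutLemma

section LinearAlgebra

variable {K V' : Type} [Field K] [AddCommGroup V'] [Module K V']

lemma exists_retractions (U₁ U₂ : Submodule K V') :
    ∃ (π₁ : V' →ₗ[K] ↥U₁) (π₂ : V' →ₗ[K] ↥U₂) (r₁ : ↥U₁ →ₗ[K] ↥(U₁ ⊓ U₂))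
      (r₂ : ↥U₂ →ₗ[K] ↥(U₁ ⊓ U₂)),
      π₁ ∘ₗ U₁.subtype = LinearMap.id ∧
      π₂ ∘ₗ U₂.subtype = LinearMap.id ∧
      π₂ ∘ₗ U₁.subtype = (Submodule.inclusion (inf_le_right : U₁ ⊓ U₂ ≤ U₂)) ∘ₗ r₁ ∧
      π₁ ∘ₗ U₂.subtype = (Submodule.inclusion (inf_le_left : U₁ ⊓ U₂ ≤ U₁)) ∘ₗ r₂ ∧
      r₁ ∘ₗ (Submodule.inclusion (inf_le_left : U₁ ⊓ U₂ ≤ U₁)) = LinearMap.id ∧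
      r₂ ∘ₗ (Submodule.inclusion (inf_le_right : U₁ ⊓ U₂ ≤ U₂)) = LinearMap.id := by
  classical
  set W := U₁ ⊓ U₂ with hW
  -- relative complements
  obtain ⟨D₁', hD₁'⟩ := Submodule.exists_isCompl (W.comap U₁.subtype)
  obtain ⟨D₂', hD₂'⟩ := Submodule.exists_isCompl (W.comap U₂.subtype)
  obtain ⟨D₃, hD₃⟩ := Submodule.exists_isCompl (U₁ ⊔ U₂)
  set D₁ := D₁'.map U₁.subtype with hD₁
  set D₂ := D₂'.map U₂.subtype with hD₂
  have hD₁le : D₁ ≤ U₁ := Submodule.map_subtype_le _ _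
  have hD₂le : D₂ ≤ U₂ := Submodule.map_subtype_le _ _
  have hsup₁ : W ⊔ D₁ = U₁ := by
    have : (W.comap U₁.subtype ⊔ D₁').map U₁.subtype = (⊤ : Submodule K ↥U₁).map U₁.subtype := by
      rw [hD₁'.sup_eq_top]
    rw [Submodule.map_sup, Submodule.map_comap_subtype, Submodule.map_top,
      Submodule.range_subtype] at this
    rw [inf_of_le_right (show W ≤ U₁ from inf_le_left)] at this
    exact this
  have hsup₂ : W ⊔ D₂ = U₂ := by
    have : (W.comap U₂.subtype ⊔ D₂').map U₂.subtype = (⊤ : Submodule K ↥U₂).map U₂.subtype := by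
      rw [hD₂'.sup_eq_top]
    rw [Submodule.map_sup, Submodule.map_comap_subtype, Submodule.map_top,
      Submodule.range_subtype] at this
    rw [inf_of_le_right (show W ≤ U₂ from inf_le_right)] at this
    exact this
  have hdisj₁ : ∀ x : V', x ∈ W → x ∈ D₁ → x = 0 := by
    intro x hxW hxD
    obtain ⟨y, hy, rfl⟩ := hxD
    have hyW : y ∈ W.comap U₁.subtype := hxW
    have := (hD₁'.disjoint).le_bot (Submodule.mem_inf.mpr ⟨hyW, hy⟩)
    rw [Submodule.mem_bot] at this
    rw [this]; rfl
  have hdisj₂ : ∀ x : V', x ∈ W → x ∈ D₂ → x = 0 := by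
    intro x hxW hxD
    obtain ⟨y, hy, rfl⟩ := hxD
    have hyW : y ∈ W.comap U₂.subtype := hxW
    have := (hD₂'.disjoint).le_bot (Submodule.mem_inf.mpr ⟨hyW, hy⟩)
    rw [Submodule.mem_bot] at this
    rw [this]; rfl
  have hdisj₃ : ∀ x : V', x ∈ U₁ ⊔ U₂ → x ∈ D₃ → x = 0 := by
    intro x hx hxD
    have := (hD₃.disjoint).le_bot (Submodule.mem_inf.mpr ⟨hx, hxD⟩)
    rwa [Submodule.mem_bot] at this
  -- IsCompl U₂ (D₁ ⊔ D₃)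
  have hcompl₂ : IsCompl U₂ (D₁ ⊔ D₃) := by
    constructor
    · rw [Submodule.disjoint_def]
      intro x hxU₂ hx
      obtain ⟨d₁, hd₁, d₃, hd₃, rfl⟩ := Submodule.mem_sup.mp hx
      have hd₃0 : d₃ = 0 := by
        apply hdisj₃ d₃ _ hd₃
        have : d₃ = (d₁ + d₃) - d₁ := by abel
        rw [this]
        exact Submodule.sub_mem _ (Submodule.mem_sup_right hxU₂)
          (Submodule.mem_sup_left (hD₁le hd₁))
      rw [hd₃0, add_zero] at hxU₂ ⊢
      apply hdisj₁ d₁ _ hd₁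
      exact Submodule.mem_inf.mpr ⟨hD₁le hd₁, hxU₂⟩
    · rw [codisjoint_iff]
      rw [eq_top_iff, ← hD₃.sup_eq_top]
      apply sup_le
      · apply sup_le
        · rw [← hsup₁]
          apply sup_le
          · exact le_trans (show W ≤ U₂ from inf_le_right) le_sup_left
          · exact le_trans le_sup_left le_sup_right
        · exact le_sup_left
      · exact le_trans le_sup_right le_sup_right
  have hcompl₁ : IsCompl U₁ (D₂ ⊔ D₃) := by
    constructor
    · rw [Submodule.disjoint_def]
      intro x hxU₁ hx
      obtain ⟨d₂, hd₂, d₃, hd₃, rfl⟩ := Submodule.mem_sup.mp hx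
      have hd₃0 : d₃ = 0 := by
        apply hdisj₃ d₃ _ hd₃
        have : d₃ = (d₂ + d₃) - d₂ := by abel
        rw [this]
        exact Submodule.sub_mem _ (Submodule.mem_sup_left hxU₁)
          (Submodule.mem_sup_right (hD₂le hd₂))
      rw [hd₃0, add_zero] at hxU₁ ⊢
      apply hdisj₂ d₂ _ hd₂
      exact Submodule.mem_inf.mpr ⟨hxU₁, hD₂le hd₂⟩
    · rw [codisjoint_iff]
      rw [eq_top_iff, ← hD₃.sup_eq_top]
      apply sup_le
      · apply sup_le
        · exact le_sup_left
        · rw [← hsup₂]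
          apply sup_le
          · exact le_trans (show W ≤ U₁ from inf_le_left) le_sup_left
          · exact le_trans le_sup_left le_sup_right
      · exact le_trans le_sup_right le_sup_right
  set π₁ := U₁.linearProjOfIsCompl (D₂ ⊔ D₃) hcompl₁ with hπ₁
  set π₂ := U₂.linearProjOfIsCompl (D₁ ⊔ D₃) hcompl₂ with hπ₂
  -- π₂ maps U₁ into W
  have hmem₁ : ∀ u : ↥U₁, (U₂.subtype ∘ₗ π₂ ∘ₗ U₁.subtype) u ∈ W := by
    intro u
    have hu : (u : V') ∈ W ⊔ D₁ := by rw [hsup₁]; exact u.2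
    obtain ⟨w, hw, d, hd, hud⟩ := Submodule.mem_sup.mp hu
    show ((π₂ (u : V') : ↥U₂) : V') ∈ W
    rw [← hud, map_add]
    have h1 : π₂ w = ⟨w, (show W ≤ U₂ from inf_le_right) hw⟩ :=
      Submodule.linearProjOfIsCompl_apply_left hcompl₂ ⟨w, _⟩
    have h2 : π₂ d = 0 :=
      Submodule.projectionOnto_apply_of_mem_right hcompl₂ (Submodule.mem_sup_left hd)
    rw [h1, h2, add_zero]
    exact hw
  have hmem₂ : ∀ u : ↥U₂, (U₁.subtype ∘ₗ π₁ ∘ₗ U₂.subtype) u ∈ W := by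
    intro u
    have hu : (u : V') ∈ W ⊔ D₂ := by rw [hsup₂]; exact u.2
    obtain ⟨w, hw, d, hd, hud⟩ := Submodule.mem_sup.mp hu
    show ((π₁ (u : V') : ↥U₁) : V') ∈ W
    rw [← hud, map_add]
    have h1 : π₁ w = ⟨w, (show W ≤ U₁ from inf_le_left) hw⟩ :=
      Submodule.linearProjOfIsCompl_apply_left hcompl₁ ⟨w, _⟩
    have h2 : π₁ d = 0 :=
      Submodule.projectionOnto_apply_of_mem_right hcompl₁ (Submodule.mem_sup_left hd)
    rw [h1, h2, add_zero]
    exact hw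
  refine ⟨π₁, π₂, LinearMap.codRestrict W (U₂.subtype ∘ₗ π₂ ∘ₗ U₁.subtype) hmem₁,
    LinearMap.codRestrict W (U₁.subtype ∘ₗ π₁ ∘ₗ U₂.subtype) hmem₂, ?_, ?_, ?_, ?_, ?_, ?_⟩
  · ext u
    exact congrArg _ (Submodule.linearProjOfIsCompl_apply_left hcompl₁ u)
  · ext u
    exact congrArg _ (Submodule.linearProjOfIsCompl_apply_left hcompl₂ u)
  · ext u
    rfl
  · ext u
    rfl
  · ext w
    show ((π₂ ((w : V')) : ↥U₂) : V') = (w : V')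
    have : π₂ ((w : V')) = ⟨(w : V'), (show W ≤ U₂ from inf_le_right) w.2⟩ :=
      Submodule.linearProjOfIsCompl_apply_left hcompl₂ ⟨(w : V'), _⟩
    rw [this]
  · ext w
    show ((π₁ ((w : V')) : ↥U₁) : V') = (w : V')
    have : π₁ ((w : V')) = ⟨(w : V'), (show W ≤ U₁ from inf_le_left) w.2⟩ :=
      Submodule.linearProjOfIsCompl_apply_left hcompl₁ ⟨(w : V'), _⟩
    rw [this]

end LinearAlgebra

/-- The ring homomorphism `Γ(X(W)) → Γ(X(V))` corresponding to the morphism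
`X(φ) : X(V) → X(W)`, i.e. the restriction of `P(φ)` to `X(V)`. -/
noncomputable def VecVariety.resMap {K : Type} [Field K] {P : PolyFunctor K} (X : VecVariety K P)
    {V W : FGModuleCat K} (φ : V →ₗ[K] W) :
    (coordRing K (P.obj W) ⧸ X.ideal W) →+* (coordRing K (P.obj V) ⧸ X.ideal V) :=
  Ideal.quotientMap (X.ideal V) (polyComap K (fun x : P.obj V => P.map φ x))
    (fun _ hf => X.mapsInto φ _ hf)

section PComap

variable {K : Type} [Field K] [CharZero K] {P : PolyFunctor K}

lemma pComap_comp {U V W : FGModuleCat K} (φ : U →ₗ[K] V) (ψ : V →ₗ[K] W) :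
    polyComap K (fun x : P.obj U => P.map (ψ ∘ₗ φ) x)
      = (polyComap K (fun x : P.obj U => P.map φ x)).comp
        (polyComap K (fun x : P.obj V => P.map ψ x)) := by
  have h : (fun x : P.obj U => P.map (ψ ∘ₗ φ) x) = ⇑(P.map ψ) ∘ ⇑(P.map φ) := by
    rw [P.map_comp]; rfl
  rw [h]
  exact polyComap_comp (P.map φ) (P.map ψ)

lemma pComap_id {U : FGModuleCat K} :
    polyComap K (fun x : P.obj U => P.map (LinearMap.id : U →ₗ[K] U) x) = RingHom.id _ := by
  have h : (fun x : P.obj U => P.map (LinearMap.id : U →ₗ[K] U) x) = id := by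
    rw [P.map_id]; rfl
  rw [h]
  exact polyComap_id

lemma ofHom_comp' {R S T : Type} [CommRing R] [CommRing S] [CommRing T]
    (f : R →+* S) (g : S →+* T) :
    CommRingCat.ofHom f ≫ CommRingCat.ofHom g = CommRingCat.ofHom (g.comp f) := rfl

lemma master (X : VecVariety K P) {Wo Uo₁ Uo₂ V : FGModuleCat K}
    (a₁ : Wo →ₗ[K] Uo₁) (a₂ : Wo →ₗ[K] Uo₂) (c₁ : Uo₁ →ₗ[K] V) (c₂ : Uo₂ →ₗ[K] V)
    (π₁ : V →ₗ[K] Uo₁) (π₂ : V →ₗ[K] Uo₂) (r₁ : Uo₁ →ₗ[K] Wo) (r₂ : Uo₂ →ₗ[K] Wo)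
    (hι : c₁ ∘ₗ a₁ = c₂ ∘ₗ a₂)
    (h1 : π₁ ∘ₗ c₁ = LinearMap.id) (h2 : π₂ ∘ₗ c₂ = LinearMap.id)
    (h3 : π₂ ∘ₗ c₁ = a₂ ∘ₗ r₁) (h4 : π₁ ∘ₗ c₂ = a₁ ∘ₗ r₂)
    (h5 : r₁ ∘ₗ a₁ = LinearMap.id) :
    (CategoryTheory.IsPushout
       (CommRingCat.ofHom (X.resMap c₁)) (CommRingCat.ofHom (X.resMap c₂))
       (CommRingCat.ofHom (X.resMap a₁)) (CommRingCat.ofHom (X.resMap a₂))) ∧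
    (CategoryTheory.IsPushout
       (CommRingCat.ofHom ((Ideal.Quotient.mk (X.ideal Uo₁)).comp
          (polyComap K (fun x : P.obj Uo₁ => P.map c₁ x))))
       (CommRingCat.ofHom (polyComap K (fun x : P.obj Uo₂ => P.map c₂ x)))
       (CommRingCat.ofHom (X.resMap a₁))
       (CommRingCat.ofHom ((Ideal.Quotient.mk (X.ideal Wo)).comp
          (polyComap K (fun x : P.obj Wo => P.map a₂ x))))) ∧
    (CategoryTheory.IsPushout
       (CommRingCat.ofHom (polyComap K (fun x : P.obj Uo₁ => P.map c₁ x)))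
       (CommRingCat.ofHom ((Ideal.Quotient.mk (X.ideal Uo₂)).comp
          (polyComap K (fun x : P.obj Uo₂ => P.map c₂ x))))
       (CommRingCat.ofHom ((Ideal.Quotient.mk (X.ideal Wo)).comp
          (polyComap K (fun x : P.obj Wo => P.map a₁ x))))
       (CommRingCat.ofHom (X.resMap a₂))) := by
  classical
  set γ₁ := polyComap K (fun x : P.obj Uo₁ => P.map c₁ x) with hγ₁
  set γ₂ := polyComap K (fun x : P.obj Uo₂ => P.map c₂ x) with hγ₂
  set α₁ := polyComap K (fun x : P.obj Wo => P.map a₁ x) with hα₁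
  set α₂ := polyComap K (fun x : P.obj Wo => P.map a₂ x) with hα₂
  set δ₁ := polyComap K (fun x : P.obj V => P.map π₁ x) with hδ₁
  set δ₂ := polyComap K (fun x : P.obj V => P.map π₂ x) with hδ₂
  set ρ₁ := polyComap K (fun x : P.obj Uo₁ => P.map r₁ x) with hρ₁
  set ρ₂ := polyComap K (fun x : P.obj Uo₂ => P.map r₂ x) with hρ₂
  have E1 : γ₁.comp δ₁ = RingHom.id _ := by
    have h := pComap_comp (P := P) c₁ π₁
    rw [h1, pComap_id] at h
    exact h.symm
  have E2 : γ₂.comp δ₂ = RingHom.id _ := by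
    have h := pComap_comp (P := P) c₂ π₂
    rw [h2, pComap_id] at h
    exact h.symm
  have E3 : α₁.comp ρ₁ = RingHom.id _ := by
    have h := pComap_comp (P := P) a₁ r₁
    rw [h5, pComap_id] at h
    exact h.symm
  have E4 : γ₂.comp δ₁ = ρ₂.comp α₁ := by
    have ha := pComap_comp (P := P) c₂ π₁
    have hb := pComap_comp (P := P) r₂ a₁
    rw [h4] at ha
    rw [← ha, hb]
  have E5 : γ₁.comp δ₂ = ρ₁.comp α₂ := by
    have ha := pComap_comp (P := P) c₁ π₂
    have hb := pComap_comp (P := P) r₁ a₂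
    rw [h3] at ha
    rw [← ha, hb]
  have E6 : α₁.comp γ₁ = α₂.comp γ₂ := by
    have ha := pComap_comp (P := P) a₁ c₁
    have hb := pComap_comp (P := P) a₂ c₂
    rw [hι] at ha
    rw [← ha, hb]
  have E7 : δ₁.comp ρ₁ = polyComap K (fun x : P.obj V => P.map (r₁ ∘ₗ π₁) x) :=
    (pComap_comp (P := P) π₁ r₁).symm
  -- pointwise versions
  have e1 : ∀ y, γ₁ (δ₁ y) = y := fun y => RingHom.congr_fun E1 y
  have e2 : ∀ y, γ₂ (δ₂ y) = y := fun y => RingHom.congr_fun E2 y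
  have e3 : ∀ y, α₁ (ρ₁ y) = y := fun y => RingHom.congr_fun E3 y
  have e4 : ∀ y, γ₂ (δ₁ y) = ρ₂ (α₁ y) := fun y => RingHom.congr_fun E4 y
  have e5 : ∀ y, γ₁ (δ₂ y) = ρ₁ (α₂ y) := fun y => RingHom.congr_fun E5 y
  have e6 : ∀ y, α₁ (γ₁ y) = α₂ (γ₂ y) := fun y => RingHom.congr_fun E6 y
  -- the core decomposition
  have core : ∀ x : coordRing K (P.obj V), α₁ (γ₁ x) ∈ X.ideal Wo →
      ∃ u v w, x = u + v + w ∧ γ₁ u = 0 ∧ γ₂ v = 0 ∧ w ∈ X.ideal V := by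
    intro x hx
    refine ⟨x - δ₁ (γ₁ x), δ₁ (γ₁ x) - δ₁ (γ₁ (δ₂ (γ₂ x))), δ₁ (γ₁ (δ₂ (γ₂ x))),
      by ring, ?_, ?_, ?_⟩
    · rw [map_sub, e1, sub_self]
    · rw [map_sub, e4, e4]
      have : α₁ (γ₁ (δ₂ (γ₂ x))) = α₁ (γ₁ x) := by
        rw [e5, e3, ← e6]
      rw [this, sub_self]
    · have hw : δ₁ (γ₁ (δ₂ (γ₂ x))) =
          polyComap K (fun x : P.obj V => P.map (r₁ ∘ₗ π₁) x) (α₁ (γ₁ x)) := by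
        rw [e5, ← e6 x]
        exact RingHom.congr_fun E7 (α₁ (γ₁ x))
      rw [hw]
      exact X.mapsInto (r₁ ∘ₗ π₁) _ hx
    
  -- surjectivity facts
  have sγ₁ : Function.Surjective ⇑γ₁ := fun y => ⟨δ₁ y, e1 y⟩
  have sγ₂ : Function.Surjective ⇑γ₂ := fun y => ⟨δ₂ y, e2 y⟩
  have sα₁ : Function.Surjective ⇑α₁ := fun y => ⟨ρ₁ y, e3 y⟩
  -- ideal mapping facts
  have m₁ : ∀ x ∈ X.ideal V, γ₁ x ∈ X.ideal Uo₁ := fun x hx => X.mapsInto c₁ x hx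
  have m₂ : ∀ x ∈ X.ideal V, γ₂ x ∈ X.ideal Uo₂ := fun x hx => X.mapsInto c₂ x hx
  have rm₁ : ∀ x, X.resMap c₁ (Ideal.Quotient.mk (X.ideal V) x)
      = Ideal.Quotient.mk (X.ideal Uo₁) (γ₁ x) := fun x => Ideal.quotientMap_mk
  have rm₂ : ∀ x, X.resMap c₂ (Ideal.Quotient.mk (X.ideal V) x)
      = Ideal.Quotient.mk (X.ideal Uo₂) (γ₂ x) := fun x => Ideal.quotientMap_mk
  have ra₁ : ∀ x, X.resMap a₁ (Ideal.Quotient.mk (X.ideal Uo₁) x)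
      = Ideal.Quotient.mk (X.ideal Wo) (α₁ x) := fun x => Ideal.quotientMap_mk
  have ra₂ : ∀ x, X.resMap a₂ (Ideal.Quotient.mk (X.ideal Uo₂) x)
      = Ideal.Quotient.mk (X.ideal Wo) (α₂ x) := fun x => Ideal.quotientMap_mk
  refine ⟨?_, ?_, ?_⟩
  · -- Square 1 : X(W) = X(U₁) ×_{X(V)} X(U₂)
    apply isPushout_of_surjective
    · -- commutativity
      refine RingHom.ext fun y => ?_
      obtain ⟨x, rfl⟩ := Ideal.Quotient.mk_surjective y
      rw [RingHom.comp_apply, RingHom.comp_apply, rm₁, rm₂, ra₁, ra₂, e6]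
    · -- f surjective
      intro z
      obtain ⟨y, rfl⟩ := Ideal.Quotient.mk_surjective z
      obtain ⟨x, rfl⟩ := sγ₁ y
      exact ⟨Ideal.Quotient.mk _ x, rm₁ x⟩
    · -- g surjective
      intro z
      obtain ⟨y, rfl⟩ := Ideal.Quotient.mk_surjective z
      obtain ⟨x, rfl⟩ := sγ₂ y
      exact ⟨Ideal.Quotient.mk _ x, rm₂ x⟩
    · -- h ∘ f surjective
      intro z
      obtain ⟨y, rfl⟩ := Ideal.Quotient.mk_surjective z
      obtain ⟨x, rfl⟩ := sα₁ y
      obtain ⟨x', rfl⟩ := sγ₁ x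
      refine ⟨Ideal.Quotient.mk _ x', ?_⟩
      rw [RingHom.comp_apply, rm₁, ra₁]
    · -- kernel condition
      intro y hy
      rw [RingHom.mem_ker] at hy
      obtain ⟨x, rfl⟩ := Ideal.Quotient.mk_surjective y
      rw [RingHom.comp_apply, rm₁, ra₁, Ideal.Quotient.eq_zero_iff_mem] at hy
      have hy' := hy
      obtain ⟨u, v, w, hxuvw, hu, hv, hw⟩ := core x hy'
      have hsplit : Ideal.Quotient.mk (X.ideal V) x
          = Ideal.Quotient.mk (X.ideal V) (u + w) + Ideal.Quotient.mk (X.ideal V) v := by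
        have hx2 : x = (u + w) + v := by rw [hxuvw]; ring
        exact hx2 ▸ RingHom.map_add _ _ _
      rw [hsplit]
      refine Ideal.add_mem _ (Ideal.mem_sup_left ?_) (Ideal.mem_sup_right ?_)
      · rw [RingHom.mem_ker, rm₁, map_add, hu, zero_add, Ideal.Quotient.eq_zero_iff_mem]
        exact m₁ w hw
      · rw [RingHom.mem_ker, rm₂, hv, map_zero]
  · -- Square 2 : X(W) = X(U₁) ×_{P(V)} P(U₂)
    apply isPushout_of_surjective
    · refine RingHom.ext fun x => ?_
      show X.resMap a₁ (Ideal.Quotient.mk (X.ideal Uo₁) (γ₁ x))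
        = Ideal.Quotient.mk (X.ideal Wo) (α₂ (γ₂ x))
      rw [ra₁, e6]
    · exact Ideal.Quotient.mk_surjective.comp sγ₁
    · exact sγ₂
    · intro z
      obtain ⟨y, rfl⟩ := Ideal.Quotient.mk_surjective z
      obtain ⟨x, rfl⟩ := sα₁ y
      obtain ⟨x', rfl⟩ := sγ₁ x
      refine ⟨x', ?_⟩
      show X.resMap a₁ (Ideal.Quotient.mk (X.ideal Uo₁) (γ₁ x')) = _
      rw [ra₁]
    · intro x hx
      rw [RingHom.mem_ker] at hx
      have hx' : α₁ (γ₁ x) ∈ X.ideal Wo := by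
        have : X.resMap a₁ (Ideal.Quotient.mk (X.ideal Uo₁) (γ₁ x)) = 0 := hx
        rwa [ra₁, Ideal.Quotient.eq_zero_iff_mem] at this
      obtain ⟨u, v, w, hxuvw, hu, hv, hw⟩ := core x hx'
      have hsplit : x = (u + w) + v := by rw [hxuvw]; ring
      rw [hsplit]
      refine Ideal.add_mem _ (Ideal.mem_sup_left ?_) (Ideal.mem_sup_right ?_)
      · rw [RingHom.mem_ker]
        show Ideal.Quotient.mk (X.ideal Uo₁) (γ₁ (u + w)) = 0
        rw [map_add, hu, zero_add, Ideal.Quotient.eq_zero_iff_mem]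
        exact m₁ w hw
      · rw [RingHom.mem_ker]
        exact hv
  · -- Square 3 : X(W) = P(U₁) ×_{P(V)} X(U₂)
    apply isPushout_of_surjective
    · refine RingHom.ext fun x => ?_
      show Ideal.Quotient.mk (X.ideal Wo) (α₁ (γ₁ x))
        = X.resMap a₂ (Ideal.Quotient.mk (X.ideal Uo₂) (γ₂ x))
      rw [ra₂, e6]
    · exact sγ₁
    · exact Ideal.Quotient.mk_surjective.comp sγ₂
    · intro z
      obtain ⟨y, rfl⟩ := Ideal.Quotient.mk_surjective z
      obtain ⟨x, rfl⟩ := sα₁ y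
      obtain ⟨x', rfl⟩ := sγ₁ x
      exact ⟨x', rfl⟩
    · intro x hx
      rw [RingHom.mem_ker] at hx
      have hx' : α₁ (γ₁ x) ∈ X.ideal Wo := by
        have : Ideal.Quotient.mk (X.ideal Wo) (α₁ (γ₁ x)) = 0 := hx
        rwa [Ideal.Quotient.eq_zero_iff_mem] at this
      obtain ⟨u, v, w, hxuvw, hu, hv, hw⟩ := core x hx'
      have hsplit : x = u + (v + w) := by rw [hxuvw]; ring
      rw [hsplit]
      refine Ideal.add_mem _ (Ideal.mem_sup_left ?_) (Ideal.mem_sup_right ?_)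
      · rw [RingHom.mem_ker]
        exact hu
      · rw [RingHom.mem_ker]
        show Ideal.Quotient.mk (X.ideal Uo₂) (γ₂ (v + w)) = 0
        rw [map_add, hv, zero_add, Ideal.Quotient.eq_zero_iff_mem]
        exact m₂ w hw

end PComap

open AlgebraicGeometry in
/-- For subspaces `U₁, U₂` of `V`:
`X(U₁ ∩ U₂) = X(U₁) ×_{X(V)} X(U₂) = X(U₁) ×_{P(V)} P(U₂) = P(U₁) ×_{P(V)} X(U₂)`. -/
theorem VecVariety_intersection_is_fibre_product
    (K : Type) [Field K] [CharZero K] (P : PolyFunctor K) (X : VecVariety K P)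
    (V : FGModuleCat K) (U₁ U₂ : Submodule K V) :
    -- `X(U₁ ∩ U₂) = X(U₁) ×_{X(V)} X(U₂)`
    IsPullback
      (Spec.map (CommRingCat.ofHom (X.resMap (V := FGModuleCat.of K ↥(U₁ ⊓ U₂))
        (W := FGModuleCat.of K U₁) (Submodule.inclusion inf_le_left))))
      (Spec.map (CommRingCat.ofHom (X.resMap (V := FGModuleCat.of K ↥(U₁ ⊓ U₂))
        (W := FGModuleCat.of K U₂) (Submodule.inclusion inf_le_right))))
      (Spec.map (CommRingCat.ofHom (X.resMap (V := FGModuleCat.of K U₁) (U₁.subtype))))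
      (Spec.map (CommRingCat.ofHom (X.resMap (V := FGModuleCat.of K U₂) (U₂.subtype)))) ∧
    -- `X(U₁ ∩ U₂) = X(U₁) ×_{P(V)} P(U₂)`
    IsPullback
      (Spec.map (CommRingCat.ofHom (X.resMap (V := FGModuleCat.of K ↥(U₁ ⊓ U₂))
        (W := FGModuleCat.of K U₁) (Submodule.inclusion inf_le_left))))
      (Spec.map (CommRingCat.ofHom (Ideal.Quotient.mk (X.ideal (FGModuleCat.of K ↥(U₁ ⊓ U₂))))) ≫
        Spec.map (CommRingCat.ofHom (polyComap K
          (fun x : P.obj (FGModuleCat.of K ↥(U₁ ⊓ U₂)) =>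
            P.map (V := FGModuleCat.of K U₂) (Submodule.inclusion inf_le_right) x))))
      (Spec.map (CommRingCat.ofHom (Ideal.Quotient.mk (X.ideal (FGModuleCat.of K U₁)))) ≫
        Spec.map (CommRingCat.ofHom (polyComap K
          (fun x : P.obj (FGModuleCat.of K U₁) => P.map (U₁.subtype) x))))
      (Spec.map (CommRingCat.ofHom (polyComap K
        (fun x : P.obj (FGModuleCat.of K U₂) => P.map (U₂.subtype) x)))) ∧
    -- `X(U₁ ∩ U₂) = P(U₁) ×_{P(V)} X(U₂)`
    IsPullback
      (Spec.map (CommRingCat.ofHom (Ideal.Quotient.mk (X.ideal (FGModuleCat.of K ↥(U₁ ⊓ U₂))))) ≫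
        Spec.map (CommRingCat.ofHom (polyComap K
          (fun x : P.obj (FGModuleCat.of K ↥(U₁ ⊓ U₂)) =>
            P.map (V := FGModuleCat.of K U₁) (Submodule.inclusion inf_le_left) x))))
      (Spec.map (CommRingCat.ofHom (X.resMap (V := FGModuleCat.of K ↥(U₁ ⊓ U₂))
        (W := FGModuleCat.of K U₂) (Submodule.inclusion inf_le_right))))
      (Spec.map (CommRingCat.ofHom (polyComap K
        (fun x : P.obj (FGModuleCat.of K U₁) => P.map (U₁.subtype) x))))
      (Spec.map (CommRingCat.ofHom (Ideal.Quotient.mk (X.ideal (FGModuleCat.of K U₂)))) ≫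
        Spec.map (CommRingCat.ofHom (polyComap K
          (fun x : P.obj (FGModuleCat.of K U₂) => P.map (U₂.subtype) x)))) := by
  
  classical
  obtain ⟨π₁, π₂, r₁, r₂, h1, h2, h3, h4, h5, h6⟩ := exists_retractions (K := K) U₁ U₂
  have hι : U₁.subtype ∘ₗ (Submodule.inclusion (inf_le_left : U₁ ⊓ U₂ ≤ U₁))
      = U₂.subtype ∘ₗ (Submodule.inclusion (inf_le_right : U₁ ⊓ U₂ ≤ U₂)) := by
    ext x; rfl
  obtain ⟨P1, P2, P3⟩ := master X
    (Wo := FGModuleCat.of K ↥(U₁ ⊓ U₂)) (Uo₁ := FGModuleCat.of K U₁)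
    (Uo₂ := FGModuleCat.of K U₂) (V := V)
    (Submodule.inclusion inf_le_left) (Submodule.inclusion inf_le_right)
    (U₁.subtype) (U₂.subtype) π₁ π₂ r₁ r₂ hι h1 h2 h3 h4 h5
  refine ⟨isPullback_SpecMap_of_isPushout _ _ _ _ P1, ?_, ?_⟩
  · rw [← Spec.map_comp, ← Spec.map_comp, ofHom_comp', ofHom_comp']
    exact isPullback_SpecMap_of_isPushout _ _ _ _ P2
  · rw [← Spec.map_comp, ← Spec.map_comp, ofHom_comp', ofHom_comp']
    exact isPullback_SpecMap_of_isPushout _ _ _ _ P3
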